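/- Suppose a sequence {x^k} in ℝⁿ is bounded and satisfies ‖x^{k+1} − x^k‖ → 0. Then the set W of limit points of {x^k} is nonempty, compact, and connected (Ostrowski's theorem). -/
import Mathlib


open Filter Topology Metric

/-- Ostrowski's theorem: if a bounded sequence in `ℝⁿ` satisfies
`‖x^{k+1} - x^k‖ → 0`, then its set of (subsequential) limit points is nonempty,
compact, and connected. -/
theorem ostrowski_limit_points {n : ℕ} (x : ℕ → EuclideanSpace ℝ (Fin n))
    (hbdd : Bornology.IsBounded (Set.range x))
    (hdiff : Tendsto (fun k => ‖x (k + 1) - x k‖) atTop (𝓝 0)) :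
    letI W : Set (EuclideanSpace ℝ (Fin n)) :=
      {y | ∃ φ : ℕ → ℕ, StrictMono φ ∧ Tendsto (x ∘ φ) atTop (𝓝 y)}
    W.Nonempty ∧ IsCompact W ∧ IsConnected W := by
  classical
  set W : Set (EuclideanSpace ℝ (Fin n)) :=
      {y | ∃ φ : ℕ → ℕ, StrictMono φ ∧ Tendsto (x ∘ φ) atTop (𝓝 y)} with hWdef
  have hK : IsCompact (closure (Set.range x)) :=
    Metric.isCompact_of_isClosed_isBounded isClosed_closure hbdd.closure
  have hmem : ∀ k, x k ∈ closure (Set.range x) := fun k =>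
    subset_closure (Set.mem_range_self k)
  have hWeq : W = {y | MapClusterPt y atTop x} := by
    ext y
    constructor
    · rintro ⟨φ, hφ, hlim⟩
      exact MapClusterPt.of_comp hφ.tendsto_atTop hlim.mapClusterPt
    · intro hy
      obtain ⟨ψ, hψ, h⟩ := TopologicalSpace.FirstCountableTopology.tendsto_subseq hy
      exact ⟨ψ, hψ, h⟩
  have hWclosed : IsClosed W := by
    rw [hWeq]
    exact isClosed_setOf_clusterPt
  have hWsub : W ⊆ closure (Set.range x) := by
    rintro y ⟨φ, hφ, hlim⟩
    exact mem_closure_of_tendsto hlim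
      (Eventually.of_forall fun j => Set.mem_range_self _)
  have hWcomp : IsCompact W := hK.of_isClosed_subset hWclosed hWsub
  have hWne : W.Nonempty := by
    obtain ⟨a, -, φ, hφ, hlim⟩ := hK.tendsto_subseq hmem
    exact ⟨a, φ, hφ, hlim⟩
  refine ⟨hWne, hWcomp, hWne, ?_⟩
  rw [isPreconnected_iff_subset_of_fully_disjoint_closed hWclosed]
  intro u v hu hv huv hdisj
  by_contra hcon
  push_neg at hcon
  obtain ⟨hnu, hnv⟩ := hcon
  set A := W ∩ u with hAdef
  set B := W ∩ v with hBdef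
  have hA : IsCompact A := hWcomp.inter_right hu
  have hB : IsCompact B := hWcomp.inter_right hv
  have hAne : A.Nonempty := by
    obtain ⟨a, haW, hav⟩ := Set.not_subset.1 hnv
    exact ⟨a, haW, (huv haW).resolve_right hav⟩
  have hBne : B.Nonempty := by
    obtain ⟨b, hbW, hbu⟩ := Set.not_subset.1 hnu
    exact ⟨b, hbW, (huv hbW).resolve_left hbu⟩
  have hdisjAB : Disjoint A B :=
    hdisj.mono Set.inter_subset_right Set.inter_subset_right
  obtain ⟨δ, hδ, hthick⟩ := hdisjAB.exists_thickenings hA hB.isClosed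
  have hδ2 : (0:ℝ) < δ / 2 := half_pos hδ
  -- small steps eventually
  have hstep : ∀ᶠ k in atTop, ‖x (k + 1) - x k‖ < δ / 2 := by
    have := hdiff.eventually (eventually_lt_nhds hδ2)
    simpa using this
  obtain ⟨N₀, hN₀⟩ := eventually_atTop.1 hstep
  -- frequently in the small thickening of a subsequential-limit set
  have hfreq : ∀ (C : Set (EuclideanSpace ℝ (Fin n))), C ⊆ W → C.Nonempty →
      ∀ N, ∃ k ≥ N, x k ∈ thickening (δ/2) C := by
    rintro C hCW ⟨c, hc⟩ N
    obtain ⟨φ, hφ, hlim⟩ := hCW hc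
    obtain ⟨J, hJ⟩ := Metric.tendsto_atTop.1 hlim (δ/2) hδ2
    refine ⟨φ (max J N), le_trans (le_max_right J N) hφ.le_apply, ?_⟩
    exact Metric.mem_thickening_iff.2 ⟨c, hc, hJ _ (le_max_left J N)⟩
  -- the crossing argument
  have hcross : ∀ N, ∃ m ≥ N, δ/2 ≤ infDist (x m) A ∧ δ/2 ≤ infDist (x m) B := by
    intro N
    obtain ⟨k, hkN, hkA⟩ := hfreq A Set.inter_subset_left hAne (max N N₀)
    obtain ⟨k', hk'k, hk'B⟩ := hfreq B Set.inter_subset_left hBne (k + 1)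
    have hhalf : thickening (δ/2) A ⊆ thickening δ A :=
      thickening_mono (half_le_self hδ.le) A
    have hhalfB : thickening (δ/2) B ⊆ thickening δ B :=
      thickening_mono (half_le_self hδ.le) B
    have hk'not : x k' ∉ thickening (δ/2) A := fun h =>
      (hthick.ne_of_mem (hhalf h) (hhalfB hk'B)) rfl
    have hex : ∃ m, k < m ∧ x m ∉ thickening (δ/2) A :=
      ⟨k', lt_of_lt_of_le (Nat.lt_succ_self k) hk'k, hk'not⟩
    set m := Nat.find hex with hmdef
    obtain ⟨hkm, hmnot⟩ := Nat.find_spec hex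
    have hm1 : x (m - 1) ∈ thickening (δ/2) A := by
      rcases eq_or_lt_of_le (Nat.succ_le_of_lt hkm) with h | h
      · rw [show m - 1 = k by omega]
        exact hkA
      · have hlt : m - 1 < m := by omega
        have := Nat.find_min hex hlt
        push_neg at this
        exact this (by omega)
    have hkm1 : N₀ ≤ m - 1 := by
      have : N₀ ≤ k := le_trans (le_max_right N N₀) hkN
      omega
    have hdistm : dist (x m) (x (m - 1)) < δ / 2 := by
      have hm1succ : (m - 1) + 1 = m := by omega
      have := hN₀ (m - 1) hkm1
      rw [hm1succ] at this
      rw [dist_eq_norm]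
      exact this
    have hinfA : infDist (x m) A < δ := by
      have h1 : infDist (x (m - 1)) A < δ / 2 :=
        (mem_thickening_iff_infDist_lt hAne).1 hm1
      calc infDist (x m) A ≤ infDist (x (m - 1)) A + dist (x m) (x (m - 1)) :=
            infDist_le_infDist_add_dist
        _ < δ / 2 + δ / 2 := by linarith
        _ = δ := by ring
    have hmemA : x m ∈ thickening δ A :=
      (mem_thickening_iff_infDist_lt hAne).2 hinfA
    have hnotB : x m ∉ thickening δ B := fun h =>
      (hthick.ne_of_mem hmemA h) rfl
    refine ⟨m, le_trans (le_trans (le_max_left N N₀) hkN) hkm.le, ?_, ?_⟩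
    · by_contra h
      push_neg at h
      exact hmnot ((mem_thickening_iff_infDist_lt hAne).2 h)
    · by_contra h
      push_neg at h
      exact hnotB ((mem_thickening_iff_infDist_lt hBne).2 (lt_of_lt_of_le h
        (by linarith)))
  -- extract a limit point of the crossing points
  have hfreq' : ∃ᶠ m in atTop, δ/2 ≤ infDist (x m) A ∧ δ/2 ≤ infDist (x m) B :=
    frequently_atTop.2 fun N => by
      obtain ⟨m, hm, h1, h2⟩ := hcross N
      exact ⟨m, hm, h1, h2⟩
  obtain ⟨ψ, hψ, hPψ⟩ := extraction_of_frequently_atTop hfreq'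
  obtain ⟨y, -, θ, hθ, hlimy⟩ := hK.tendsto_subseq (x := x ∘ ψ) (fun j => hmem _)
  have hyW : y ∈ W := ⟨ψ ∘ θ, hψ.comp hθ, hlimy⟩
  have hyA : δ/2 ≤ infDist y A := by
    have hcont : Tendsto (fun j => infDist ((x ∘ ψ ∘ θ) j) A) atTop (𝓝 (infDist y A)) :=
      ((continuous_infDist_pt A).tendsto y).comp hlimy
    exact ge_of_tendsto' hcont fun j => (hPψ (θ j)).1
  have hyB : δ/2 ≤ infDist y B := by
    have hcont : Tendsto (fun j => infDist ((x ∘ ψ ∘ θ) j) B) atTop (𝓝 (infDist y B)) :=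
      ((continuous_infDist_pt B).tendsto y).comp hlimy
    exact ge_of_tendsto' hcont fun j => (hPψ (θ j)).2
  rcases huv hyW with hy | hy
  · have : infDist y A = 0 := infDist_zero_of_mem ⟨hyW, hy⟩
    rw [this] at hyA
    linarith
  · have : infDist y B = 0 := infDist_zero_of_mem ⟨hyW, hy⟩
    rw [this] at hyB
    linarith
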